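/- Let G be a group with finite generating set X whose isoperimetric spectrum is linear, i.e., f_{G,X}(k,m,n) ∼ n/m. Then there exists a constant D > 0 with the following property: if p is a geodesic path in Cay(G,X), o is a vertex on p, and q is a path with q_- = p_-, q_+ = p_+ that does not intersect the closed r-neighborhood of o for some r ≥ 0 (an r-detour of o), and if the word labelling the loop p q^{-1} belongs to the normal closure ⟪S_k⟫ for some k ∈ ℕ, then the length of q satisfies ℓ(q) ≥ D·(r/k)². -/

import Mathlib

set_option linter.unusedSectionVars false
set_option maxHeartbeats 1000000


open Function

namespace IsoSpecPaper

variable {ι : Type*} {G : Type*} [Group G]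

/-- The (reduced) length of an element of a free group. -/
noncomputable def wnorm (w : FreeGroup ι) : ℕ :=
  @FreeGroup.norm ι (Classical.decEq ι) w

/-- `triv φ k` : the set of words of length at most `k` in the generators
(and their inverses) representing the identity of `G` under the marking `φ`. -/
noncomputable def triv (φ : FreeGroup ι →* G) (k : ℕ) : Set (FreeGroup ι) :=
  {w | wnorm w ≤ k ∧ φ w = 1}

/-- `AreaLe R w l` : `w` is a product of `l` conjugates of elements of `R` or
their inverses in the free group. -/
def AreaLe (R : Set (FreeGroup ι)) (w : FreeGroup ι) (l : ℕ) : Prop :=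
  ∃ L : List (FreeGroup ι × FreeGroup ι), L.length = l ∧
    (∀ p ∈ L, p.2 ∈ R ∨ p.2⁻¹ ∈ R) ∧
    w = (L.map fun p => p.1⁻¹ * p.2 * p.1).prod

/-- The area of `w` with respect to the set of relators `R`. -/
noncomputable def area (R : Set (FreeGroup ι)) (w : FreeGroup ι) : ℕ :=
  sInf {l | AreaLe R w l}

/-- The isoperimetric spectrum of the marked group `(G, φ)`:
`isoSpec φ k m n = max { area_{S_m}(w) : w ∈ ⟪S_k⟫, ‖w‖ ≤ n }`. -/
noncomputable def isoSpec (φ : FreeGroup ι →* G) (k m n : ℕ) : ℕ :=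
  sSup (area (triv φ m) '' {w | w ∈ Subgroup.normalClosure (triv φ k) ∧ wnorm w ≤ n})

/-- The real-valued isoperimetric spectrum. -/
noncomputable def isoSpecR (φ : FreeGroup ι →* G) : ℕ → ℕ → ℕ → ℝ :=
  fun k m n => (isoSpec φ k m n : ℝ)

/-- The Dehn function of the presentation with relators `R`. -/
noncomputable def dehn (R : Set (FreeGroup ι)) (n : ℕ) : ℕ :=
  sSup (area R '' {w | w ∈ Subgroup.normalClosure R ∧ wnorm w ≤ n})

/-- The quasi-order `f ≼ g` on functions of triples `(k,m,n)` of positive integers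
with `m ≥ k`. -/
def SpecLE (f g : ℕ → ℕ → ℕ → ℝ) : Prop :=
  ∃ C : ℕ, 0 < C ∧ ∀ k m n : ℕ, 0 < k → 0 < m → 0 < n → C * k ≤ m →
    f k (C * m) n ≤ C * g (C * k) m (C * n) + C * (n : ℝ) / m + C

/-- Equivalence of isoperimetric functions: `f ∼ g`. -/
def SpecEquiv (f g : ℕ → ℕ → ℕ → ℝ) : Prop := SpecLE f g ∧ SpecLE g f

/-- The linear spectrum `(k,m,n) ↦ n/m`. -/
noncomputable def linSpec : ℕ → ℕ → ℕ → ℝ := fun _ m n => (n : ℝ) / m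

/-- The word length of `g ∈ G` with respect to the marking `φ`. -/
noncomputable def wlen (φ : FreeGroup ι →* G) (g : G) : ℕ :=
  sInf {n | ∃ w : FreeGroup ι, wnorm w = n ∧ φ w = g}

/-- The word metric on `G` with respect to the marking `φ`. -/
noncomputable def wdist (φ : FreeGroup ι →* G) (g h : G) : ℕ := wlen φ (g⁻¹ * h)

/-- Quasi-isometry of marked groups with respect to their word metrics. -/
noncomputable def QuasiIsometric {H : Type*} [Group H] {κ : Type*}
    (φ : FreeGroup ι →* G) (ψ : FreeGroup κ →* H) : Prop :=
  ∃ L : ℝ, 0 ≤ L ∧ ∃ (α : G → H) (β : H → G),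
    (∀ x y : G, (wdist ψ (α x) (α y) : ℝ) ≤ L * wdist φ x y + L) ∧
    (∀ u v : H, (wdist φ (β u) (β v) : ℝ) ≤ L * wdist ψ u v + L) ∧
    (∀ t : H, (wdist ψ (α (β t)) t : ℝ) ≤ L) ∧
    (∀ s : G, (wdist φ (β (α s)) s : ℝ) ≤ L)

/-- A (combinatorial) geodesic path of length `n` in the Cayley graph of `(G, φ)`:
consecutive vertices are at distance at most `1` and the endpoints are at
distance exactly `n`. -/
noncomputable def IsGeodesic (φ : FreeGroup ι →* G) {n : ℕ} (p : Fin (n + 1) → G) : Prop :=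
  (∀ i : Fin n, wdist φ (p i.castSucc) (p i.succ) ≤ 1) ∧
  wdist φ (p 0) (p (Fin.last n)) = n

/-- Every vertex of the path `p` lies within distance `δ` of the set `A`. -/
noncomputable def ThinAt (φ : FreeGroup ι →* G) (δ : ℝ) {n : ℕ}
    (p : Fin (n + 1) → G) (A : Set G) : Prop :=
  ∀ i, ∃ a ∈ A, (wdist φ (p i) a : ℝ) ≤ δ

/-- The Cayley graph of `(G, φ)` is `δ`-hyperbolic: every geodesic triangle is `δ`-thin. -/
noncomputable def HypConst (φ : FreeGroup ι →* G) (δ : ℝ) : Prop :=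
  ∀ (n₁ n₂ n₃ : ℕ) (p : Fin (n₁ + 1) → G) (q : Fin (n₂ + 1) → G) (r : Fin (n₃ + 1) → G),
    IsGeodesic φ p → IsGeodesic φ q → IsGeodesic φ r →
    p (Fin.last n₁) = q 0 → q (Fin.last n₂) = r 0 → r (Fin.last n₃) = p 0 →
    ThinAt φ δ p (Set.range q ∪ Set.range r) ∧
    ThinAt φ δ q (Set.range r ∪ Set.range p) ∧
    ThinAt φ δ r (Set.range p ∪ Set.range q)

/-- The marked group `(G, φ)` is hyperbolic. -/
noncomputable def IsHyperbolic (φ : FreeGroup ι →* G) : Prop :=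
  ∃ δ : ℝ, 0 ≤ δ ∧ HypConst φ δ

/-- `G` (marked by `φ`) is a limit (direct limit) of hyperbolic groups. -/
noncomputable def LimitOfHyperbolic (φ : FreeGroup ι →* G) : Prop :=
  Surjective φ ∧ ∃ R : ℕ → Set (FreeGroup ι),
    (∀ i j, i ≤ j → R i ⊆ R j) ∧
    φ.ker = Subgroup.normalClosure (⋃ i, R i) ∧
    ∀ i, IsHyperbolic (QuotientGroup.mk' (Subgroup.normalClosure (R i)))

/-- `G` (marked by `φ`) is well-approximated by hyperbolic groups. -/
noncomputable def WellApproximated (φ : FreeGroup ι →* G) : Prop :=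
  Surjective φ ∧ ∃ R : ℕ → Set (FreeGroup ι),
    (∀ i j, i ≤ j → R i ⊆ R j) ∧
    φ.ker = Subgroup.normalClosure (⋃ i, R i) ∧
    (∀ i, IsHyperbolic (QuotientGroup.mk' (Subgroup.normalClosure (R i)))) ∧
    ∃ C : ℕ, 0 < C ∧ ∀ i : ℕ, 0 < i →
      (∀ w : FreeGroup ι, wnorm w ≤ i → φ w = 1 →
        w ∈ Subgroup.normalClosure (R i)) ∧
      HypConst (QuotientGroup.mk' (Subgroup.normalClosure (R i))) ((C * i : ℕ) : ℝ)

/-- The set of vertices visited by the path starting at `x` labelled by the word `L`. -/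
noncomputable def pathVerts {G : Type*} [Group G] {ι : Type*}
    (φ : FreeGroup ι →* G) (x : G) (L : List (ι × Bool)) : Set G :=
  {g | ∃ i ≤ L.length, g = x * φ (FreeGroup.mk (L.take i))}

section Aux

variable [DecidableEq ι] (φ : FreeGroup ι →* G)

lemma wnorm_eq_norm (w : FreeGroup ι) : wnorm w = FreeGroup.norm w := by
  have h : (Classical.decEq ι) = (inferInstance : DecidableEq ι) := by
    funext a b; exact Subsingleton.elim _ _
  show @FreeGroup.norm ι (Classical.decEq ι) w = _
  rw [h]

lemma wnorm_toWord (w : FreeGroup ι) : wnorm w = w.toWord.length := by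
  rw [wnorm_eq_norm]; rfl

lemma wnorm_mk_le (L : List (ι × Bool)) : wnorm (FreeGroup.mk L) ≤ L.length := by
  rw [wnorm_eq_norm]; exact FreeGroup.norm_mk_le

lemma wnorm_one : wnorm (1 : FreeGroup ι) = 0 := by
  rw [wnorm_eq_norm]; exact FreeGroup.norm_one

lemma wnorm_inv (w : FreeGroup ι) : wnorm w⁻¹ = wnorm w := by
  rw [wnorm_eq_norm, wnorm_eq_norm]; exact FreeGroup.norm_inv_eq

lemma wnorm_mul_le (u v : FreeGroup ι) : wnorm (u * v) ≤ wnorm u + wnorm v := by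
  rw [wnorm_eq_norm, wnorm_eq_norm, wnorm_eq_norm]; exact FreeGroup.norm_mul_le u v

lemma wlen_le (u : FreeGroup ι) : wlen φ (φ u) ≤ wnorm u :=
  Nat.sInf_le ⟨u, rfl, rfl⟩

variable (hφ : Surjective φ)
include hφ

lemma wlen_exists (g : G) : ∃ w : FreeGroup ι, wnorm w = wlen φ g ∧ φ w = g := by
  obtain ⟨u, hu⟩ := hφ g
  have hne : {n | ∃ w : FreeGroup ι, wnorm w = n ∧ φ w = g}.Nonempty := ⟨wnorm u, u, rfl, hu⟩
  exact Nat.sInf_mem hne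

omit hφ in
lemma wlen_one : wlen φ (1 : G) = 0 := by
  have := wlen_le φ 1
  simpa [wnorm_one] using this

lemma wlen_mul_le (g h : G) : wlen φ (g * h) ≤ wlen φ g + wlen φ h := by
  obtain ⟨u, hu, hgu⟩ := wlen_exists φ hφ g
  obtain ⟨v, hv, hgv⟩ := wlen_exists φ hφ h
  calc wlen φ (g * h) = wlen φ (φ (u * v)) := by rw [map_mul, hgu, hgv]
    _ ≤ wnorm (u * v) := wlen_le φ _
    _ ≤ wnorm u + wnorm v := wnorm_mul_le u v
    _ = _ := by rw [hu, hv]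

lemma wlen_inv (g : G) : wlen φ g⁻¹ = wlen φ g := by
  have key : ∀ h : G, wlen φ h⁻¹ ≤ wlen φ h := by
    intro h
    obtain ⟨u, hu, hgu⟩ := wlen_exists φ hφ h
    calc wlen φ h⁻¹ = wlen φ (φ u⁻¹) := by rw [map_inv, hgu]
      _ ≤ wnorm u⁻¹ := wlen_le φ _
      _ = wnorm u := wnorm_inv u
      _ = _ := hu
  exact le_antisymm (key g) (by simpa using key g⁻¹)

lemma wdist_symm (g h : G) : wdist φ g h = wdist φ h g := by
  unfold wdist
  rw [← wlen_inv φ hφ (g⁻¹ * h)]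
  simp [mul_comm]

lemma wdist_triangle (g h i : G) : wdist φ g i ≤ wdist φ g h + wdist φ h i := by
  unfold wdist
  have : g⁻¹ * i = (g⁻¹ * h) * (h⁻¹ * i) := by group
  rw [this]
  exact wlen_mul_le φ hφ _ _

omit hφ in
lemma wdist_self (g : G) : wdist φ g g = 0 := by
  unfold wdist; simp [wlen_one φ]

omit hφ in
lemma wdist_mul (g : G) (u : FreeGroup ι) : wdist φ g (g * φ u) ≤ wnorm u := by
  unfold wdist
  calc wlen φ (g⁻¹ * (g * φ u)) = wlen φ (φ u) := by group
    _ ≤ wnorm u := wlen_le φ u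

end Aux

section Paths

variable [DecidableEq ι] (φ : FreeGroup ι →* G)

/-- The `j`-th vertex of the path starting at `x` labelled by `L`. -/
noncomputable def vtx (x : G) (L : List (ι × Bool)) (j : ℕ) : G :=
  x * φ (FreeGroup.mk (L.take j))

lemma vtx_zero (x : G) (L : List (ι × Bool)) : vtx φ x L 0 = x := by
  simp [vtx, ← FreeGroup.one_eq_mk]

lemma vtx_length (x : G) (L : List (ι × Bool)) : vtx φ x L L.length = x * φ (FreeGroup.mk L) := by
  simp [vtx]

lemma vtx_ge (x : G) (L : List (ι × Bool)) {j : ℕ} (h : L.length ≤ j) :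
    vtx φ x L j = x * φ (FreeGroup.mk L) := by
  simp [vtx, List.take_of_length_le h]

lemma vtx_cons (x : G) (e : ι × Bool) (L : List (ι × Bool)) (j : ℕ) :
    vtx φ x (e :: L) (j + 1) = vtx φ (x * φ (FreeGroup.mk [e])) L j := by
  unfold vtx
  rw [List.take_succ_cons, show (e :: L.take j) = [e] ++ L.take j from rfl,
    ← FreeGroup.mul_mk, map_mul, mul_assoc]

lemma wdist_vtx_succ (x : G) (L : List (ι × Bool)) (j : ℕ) :
    wdist φ (vtx φ x L j) (vtx φ x L (j + 1)) ≤ 1 := by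
  have h : vtx φ x L (j+1) = vtx φ x L j * φ (FreeGroup.mk (L[j]?.toList)) := by
    unfold vtx
    rw [List.take_succ, ← FreeGroup.mul_mk, map_mul, mul_assoc]
  rw [h]
  calc wdist φ (vtx φ x L j) (vtx φ x L j * φ (FreeGroup.mk (L[j]?.toList)))
      ≤ wnorm (FreeGroup.mk (L[j]?.toList)) := wdist_mul φ _ _
    _ ≤ (L[j]?.toList).length := wnorm_mk_le _
    _ ≤ 1 := by cases L[j]? <;> simp

lemma wdist_vtx_le (x : G) (L : List (ι × Bool)) {i j : ℕ} (hij : i ≤ j) :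
    wdist φ (vtx φ x L i) (vtx φ x L j) ≤ j - i := by
  have hsplit : FreeGroup.mk (L.take j) =
      FreeGroup.mk (L.take i) * FreeGroup.mk ((L.take j).drop i) := by
    rw [FreeGroup.mul_mk]
    congr 1
    rw [show L.take i = (L.take j).take i by rw [List.take_take, inf_of_le_left hij]]
    exact (List.take_append_drop i (L.take j)).symm
  have h : vtx φ x L j = vtx φ x L i * φ (FreeGroup.mk ((L.take j).drop i)) := by
    unfold vtx
    rw [hsplit, map_mul, mul_assoc]
  rw [h]
  calc wdist φ _ _ ≤ wnorm (FreeGroup.mk ((L.take j).drop i)) := wdist_mul φ _ _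
    _ ≤ ((L.take j).drop i).length := wnorm_mk_le _
    _ ≤ j - i := by
        rw [List.length_drop, List.length_take]
        omega

lemma wdist_base_vtx (x : G) (L : List (ι × Bool)) (j : ℕ) :
    wdist φ x (vtx φ x L j) ≤ j := by
  have := wdist_vtx_le φ x L (Nat.zero_le j)
  simpa [vtx_zero] using this

/-- Pathsum of an (oriented-edge) weight along the path labelled by `L` from `x`. -/
noncomputable def pSum (W : G → G → ℝ) (x : G) (L : List (ι × Bool)) : ℝ :=
  ∑ j ∈ Finset.range L.length, W (vtx φ x L j) (vtx φ x L (j + 1))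

/-- Antisymmetry of a weight. -/
def Anti (W : G → G → ℝ) : Prop := ∀ g h : G, W g h = - W h g

lemma pSum_nil (W : G → G → ℝ) (x : G) : pSum φ W x [] = 0 := by
  simp [pSum]

lemma pSum_cons (W : G → G → ℝ) (x : G) (e : ι × Bool) (L : List (ι × Bool)) :
    pSum φ W x (e :: L) = W x (x * φ (FreeGroup.mk [e])) + pSum φ W (x * φ (FreeGroup.mk [e])) L := by
  unfold pSum
  rw [List.length_cons, Finset.sum_range_succ']
  simp only [vtx_cons]
  rw [add_comm]
  congr 1
  simp [vtx, ← FreeGroup.one_eq_mk]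

lemma pSum_append (W : G → G → ℝ) (x : G) (L₁ L₂ : List (ι × Bool)) :
    pSum φ W x (L₁ ++ L₂) = pSum φ W x L₁ + pSum φ W (x * φ (FreeGroup.mk L₁)) L₂ := by
  induction L₁ generalizing x with
  | nil => simp [pSum_nil, ← FreeGroup.one_eq_mk]
  | cons e L ih =>
      rw [List.cons_append, pSum_cons, pSum_cons, ih, add_assoc]
      congr 2
      rw [show (e :: L) = [e] ++ L from rfl, ← FreeGroup.mul_mk, map_mul, mul_assoc]

lemma pSum_step (W : G → G → ℝ) (hW : Anti W) (x : G) {L₁ L₂ : List (ι × Bool)}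
    (h : FreeGroup.Red.Step L₁ L₂) : pSum φ W x L₁ = pSum φ W x L₂ := by
  cases h with
  | @not A B c b =>
    have h1 : FreeGroup.mk [(c, !b)] = (FreeGroup.mk [(c, b)])⁻¹ := by
      rw [FreeGroup.inv_mk]; simp [FreeGroup.invRev]
    have hmk : FreeGroup.mk [(c, b), (c, !b)] = 1 := by
      rw [show [(c, b), (c, !b)] = [(c,b)] ++ [(c, !b)] from rfl, ← FreeGroup.mul_mk, h1,
        mul_inv_cancel]
    have hinv : φ (FreeGroup.mk [(c, !b)]) = (φ (FreeGroup.mk [(c, b)]))⁻¹ := by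
      rw [h1, map_inv]
    have h2 : ∀ y : G, pSum φ W y [(c, b), (c, !b)] = 0 := by
      intro y
      rw [show [(c, b), (c, !b)] = (c,b) :: [(c, !b)] from rfl, pSum_cons, pSum_cons, pSum_nil,
        hinv]
      have hz : y * φ (FreeGroup.mk [(c, b)]) * (φ (FreeGroup.mk [(c, b)]))⁻¹ = y := by group
      rw [hz, hW (y * φ (FreeGroup.mk [(c, b)])) y]
      ring
    calc pSum φ W x (A ++ (c, b) :: (c, !b) :: B)
        = pSum φ W x A + (pSum φ W (x * φ (FreeGroup.mk A)) [(c, b), (c, !b)]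
            + pSum φ W (x * φ (FreeGroup.mk A) * φ (FreeGroup.mk [(c, b), (c, !b)])) B) := by
          rw [show A ++ (c, b) :: (c, !b) :: B = A ++ ([(c, b), (c, !b)] ++ B) from rfl,
            pSum_append, pSum_append]
      _ = pSum φ W x A + pSum φ W (x * φ (FreeGroup.mk A)) B := by
          rw [hmk, map_one, mul_one, h2, zero_add]
      _ = pSum φ W x (A ++ B) := (pSum_append φ W x A B).symm

lemma pSum_red (W : G → G → ℝ) (hW : Anti W) (x : G) {L₁ L₂ : List (ι × Bool)}
    (h : FreeGroup.Red L₁ L₂) : pSum φ W x L₁ = pSum φ W x L₂ := by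
  induction h with
  | refl => rfl
  | tail _ hstep ih => rw [ih, pSum_step φ W hW x hstep]

/-- The pathsum of the reduced word of a free group element. -/
noncomputable def chi (W : G → G → ℝ) (x : G) (w : FreeGroup ι) : ℝ :=
  pSum φ W x w.toWord

lemma pSum_eq_chi (W : G → G → ℝ) (hW : Anti W) (x : G) (L : List (ι × Bool)) :
    pSum φ W x L = chi φ W x (FreeGroup.mk L) := by
  unfold chi
  rw [FreeGroup.toWord_mk]
  exact pSum_red φ W hW x FreeGroup.reduce.red

lemma chi_mul (W : G → G → ℝ) (hW : Anti W) (x : G) (u v : FreeGroup ι) :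
    chi φ W x (u * v) = chi φ W x u + chi φ W (x * φ u) v := by
  have h1 : u * v = FreeGroup.mk (u.toWord ++ v.toWord) := by
    rw [← FreeGroup.mul_mk, FreeGroup.mk_toWord, FreeGroup.mk_toWord]
  rw [h1, ← pSum_eq_chi φ W hW, pSum_append]
  unfold chi
  rw [FreeGroup.mk_toWord]

lemma chi_one (W : G → G → ℝ) (x : G) : chi φ W x 1 = 0 := by
  unfold chi
  rw [FreeGroup.toWord_one, pSum_nil]

lemma chi_conj (W : G → G → ℝ) (hW : Anti W) (x : G) (f R : FreeGroup ι) (hR : φ R = 1) :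
    chi φ W x (f⁻¹ * R * f) = chi φ W (x * (φ f)⁻¹) R := by
  have h0 : chi φ W x (f⁻¹ * f) = 0 := by rw [inv_mul_cancel, chi_one]
  rw [chi_mul φ W hW x f⁻¹ f] at h0
  rw [show f⁻¹ * R * f = f⁻¹ * (R * f) by group, chi_mul φ W hW, chi_mul φ W hW,
    map_inv, hR, mul_one]
  rw [map_inv] at h0
  linarith [h0]

lemma chi_prod (W : G → G → ℝ) (hW : Anti W) (x : G) (L : List (FreeGroup ι × FreeGroup ι))
    (hL : ∀ p ∈ L, φ p.2 = 1) :
    chi φ W x (L.map fun p => p.1⁻¹ * p.2 * p.1).prod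
      = (L.map fun p => chi φ W (x * (φ p.1)⁻¹) p.2).sum := by
  induction L with
  | nil => simp [chi_one]
  | cons p L ih =>
      have hp2 : φ p.2 = 1 := hL p List.mem_cons_self
      have hc : φ (p.1⁻¹ * p.2 * p.1) = 1 := by
        rw [map_mul, map_mul, hp2, map_inv]; group
      simp only [List.map_cons, List.prod_cons, List.sum_cons]
      rw [chi_mul φ W hW, hc, mul_one, chi_conj φ W hW x p.1 p.2 hp2,
        ih (fun q hq => hL q (List.mem_cons_of_mem _ hq))]

end Paths

section Weight

variable [DecidableEq ι] (φ : FreeGroup ι →* G)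

/-- Indicator of being at distance `≥ t` from `o`. -/
noncomputable def ft (o : G) (t : ℕ) (v : G) : ℝ := if t ≤ wdist φ o v then 1 else 0

/-- Distance from the reference point `a` to the inner endpoint of an edge. -/
noncomputable def uu (o a : G) (g h : G) : ℝ :=
  if wdist φ o g ≤ wdist φ o h then (wdist φ a g : ℝ) else (wdist φ a h : ℝ)

/-- The level-`t` crossing weight. -/
noncomputable def Wt (o a : G) (t : ℕ) (g h : G) : ℝ :=
  (ft φ o t h - ft φ o t g) * uu φ o a g h

lemma anti_Wt (o a : G) (t : ℕ) : Anti (Wt φ o a t) := by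
  intro g h
  unfold Wt ft uu
  rcases lt_trichotomy (wdist φ o g) (wdist φ o h) with hlt | heq | hgt
  · rw [if_pos hlt.le, if_neg (not_le.mpr hlt)]; ring
  · rw [heq]; ring
  · rw [if_neg (not_le.mpr hgt), if_pos hgt.le]; ring

lemma abs_wdist_sub (hφ : Surjective φ) (a y z : G) :
    |(wdist φ a z : ℝ) - (wdist φ a y : ℝ)| ≤ (wdist φ y z : ℝ) := by
  rw [abs_sub_le_iff]
  constructor
  · have h : (wdist φ a z : ℝ) ≤ (wdist φ a y : ℝ) + (wdist φ y z : ℝ) := by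
      exact_mod_cast wdist_triangle φ hφ a y z
    linarith
  · have h2 : wdist φ z y = wdist φ y z := wdist_symm φ hφ z y
    have h : (wdist φ a y : ℝ) ≤ (wdist φ a z : ℝ) + (wdist φ y z : ℝ) := by
      rw [← h2]; exact_mod_cast wdist_triangle φ hφ a z y
    linarith

/-- Key per-relator estimate: the total transport over all levels is at most the square
of the relator length. -/
lemma loop_bound (hφ : Surjective φ) (o : G) (a : ℕ → G) (T : ℕ) (y : G)
    (LR : List (ι × Bool)) (hloop : φ (FreeGroup.mk LR) = 1) :
    ∑ t ∈ Finset.Icc 1 T, pSum φ (Wt φ o (a t) t) y LR ≤ (LR.length : ℝ) ^ 2 := by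
  classical
  set N := LR.length with hN
  set v : ℕ → G := fun j => vtx φ y LR j with hv
  set d : ℕ → ℕ := fun j => wdist φ o (v j) with hd
  have hv0 : v 0 = y := vtx_zero φ y LR
  have hvN : v N = y := by
    rw [hv]; simp only; rw [vtx_length, hloop, mul_one]
  have hstep : ∀ j, d (j + 1) ≤ d j + 1 ∧ d j ≤ d (j + 1) + 1 := by
    intro j
    have h1 : wdist φ (v j) (v (j+1)) ≤ 1 := wdist_vtx_succ φ y LR j
    have h2 : wdist φ (v (j+1)) (v j) ≤ 1 := by
      rw [wdist_symm φ hφ]; exact h1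
    constructor
    · calc d (j+1) ≤ d j + wdist φ (v j) (v (j+1)) := wdist_triangle φ hφ _ _ _
        _ ≤ d j + 1 := by omega
    · calc d j ≤ d (j+1) + wdist φ (v (j+1)) (v j) := wdist_triangle φ hφ _ _ _
        _ ≤ d (j+1) + 1 := by omega
  set cross : ℕ → ℕ → Prop :=
    fun t j => (d j < t ∧ t ≤ d (j+1)) ∨ (d (j+1) < t ∧ t ≤ d j) with hcross
  have hper : ∀ t, pSum φ (Wt φ o (a t) t) y LR
      ≤ ∑ j ∈ Finset.range N, (if cross t j then (N : ℝ) else 0) := by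
    intro t
    set K : ℝ := (wdist φ (a t) y : ℝ) with hK
    set fd : ℕ → ℝ := fun j => ft φ o t (v (j+1)) - ft φ o t (v j) with hfd
    set uj : ℕ → ℝ := fun j => uu φ o (a t) (v j) (v (j+1)) with huj
    have htele : ∑ j ∈ Finset.range N, fd j = 0 := by
      rw [hfd]
      rw [Finset.sum_range_sub (fun j => ft φ o t (v j)) N, hvN, hv0, sub_self]
    have heq : pSum φ (Wt φ o (a t) t) y LR = ∑ j ∈ Finset.range N, fd j * (uj j - K) := by
      have hterm : ∀ j ∈ Finset.range N, fd j * (uj j - K) = fd j * uj j - K * fd j :=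
        fun j _ => by ring
      rw [Finset.sum_congr rfl hterm, Finset.sum_sub_distrib, ← Finset.mul_sum, htele,
        mul_zero, sub_zero]
      rfl
    rw [heq]
    apply Finset.sum_le_sum
    intro j hj
    by_cases hc : cross t j
    · rw [if_pos hc]
      have habs1 : |fd j| ≤ 1 := by
        rw [hfd]; simp only [ft]
        split_ifs <;> norm_num
      have hbase : ∀ i, i ≤ N → (wdist φ y (v i) : ℝ) ≤ (N : ℝ) := by
        intro i hi
        have := wdist_base_vtx φ y LR i
        have : wdist φ y (v i) ≤ N := le_trans this hi
        exact_mod_cast this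
      have hjN : j < N := Finset.mem_range.mp hj
      have habs2 : |uj j - K| ≤ (N : ℝ) := by
        rw [huj]; simp only [uu]
        split_ifs
        · exact le_trans (abs_wdist_sub φ hφ (a t) y (v j)) (hbase j hjN.le)
        · exact le_trans (abs_wdist_sub φ hφ (a t) y (v (j+1))) (hbase (j+1) hjN)
      calc fd j * (uj j - K) ≤ |fd j * (uj j - K)| := le_abs_self _
        _ = |fd j| * |uj j - K| := abs_mul _ _
        _ ≤ 1 * (N : ℝ) := by
            apply mul_le_mul habs1 habs2 (abs_nonneg _) zero_le_one
        _ = (N : ℝ) := one_mul _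
    · rw [if_neg hc]
      have hfd0 : fd j = 0 := by
        rw [hfd]; simp only [ft]
        rcases le_or_gt t (d j) with h1 | h1 <;> rcases le_or_gt t (d (j+1)) with h2 | h2
        · rw [if_pos h2, if_pos h1, sub_self]
        · exact absurd (Or.inr ⟨h2, h1⟩) hc
        · exact absurd (Or.inl ⟨h1, h2⟩) hc
        · rw [if_neg (not_le.mpr h2), if_neg (not_le.mpr h1), sub_self]
      rw [hfd0, zero_mul]
  have hcols : ∀ j, ∑ t ∈ Finset.Icc 1 T, (if cross t j then (N : ℝ) else 0) ≤ (N : ℝ) := by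
    intro j
    have h1 : ∑ t ∈ Finset.Icc 1 T, (if cross t j then (N : ℝ) else 0)
        = (N : ℝ) * ∑ t ∈ Finset.Icc 1 T, (if cross t j then (1 : ℝ) else 0) := by
      rw [Finset.mul_sum]
      exact Finset.sum_congr rfl fun t _ => by rw [mul_ite, mul_one, mul_zero]
    have h2 : ∑ t ∈ Finset.Icc 1 T, (if cross t j then (1 : ℝ) else 0)
        = (((Finset.Icc 1 T).filter (fun t => cross t j)).card : ℝ) :=
      Finset.sum_boole _ _
    have h3 : ((Finset.Icc 1 T).filter (fun t => cross t j)).card ≤ 1 := by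
      rw [Finset.card_le_one]
      intro t1 ht1 t2 ht2
      simp only [Finset.mem_filter] at ht1 ht2
      have hs := hstep j
      rcases ht1.2 with h | h <;> rcases ht2.2 with h' | h' <;> omega
    rw [h1, h2]
    calc (N : ℝ) * (((Finset.Icc 1 T).filter (fun t => cross t j)).card : ℝ)
        ≤ (N : ℝ) * 1 := by
          apply mul_le_mul_of_nonneg_left _ (Nat.cast_nonneg N)
          exact_mod_cast h3
      _ = (N : ℝ) := mul_one _
  calc ∑ t ∈ Finset.Icc 1 T, pSum φ (Wt φ o (a t) t) y LR
      ≤ ∑ t ∈ Finset.Icc 1 T, ∑ j ∈ Finset.range N, (if cross t j then (N : ℝ) else 0) :=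
        Finset.sum_le_sum fun t _ => hper t
    _ = ∑ j ∈ Finset.range N, ∑ t ∈ Finset.Icc 1 T, (if cross t j then (N : ℝ) else 0) :=
        Finset.sum_comm
    _ ≤ ∑ _j ∈ Finset.range N, (N : ℝ) := Finset.sum_le_sum fun j _ => hcols j
    _ = (N : ℝ) ^ 2 := by
        rw [Finset.sum_const, Finset.card_range, nsmul_eq_mul]; ring

lemma list_sum_swap {β : Type*} (L : List β) (s : Finset ℕ) (f : ℕ → β → ℝ) :
    ∑ t ∈ s, (L.map (f t)).sum = (L.map fun b => ∑ t ∈ s, f t b).sum := by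
  induction L with
  | nil => simp
  | cons b L ih => simp [Finset.sum_add_distrib, ih]

lemma gauss_sum (T : ℕ) : ∑ t ∈ Finset.Icc 1 T, (2 * (t : ℝ) - 2) = (T : ℝ) ^ 2 - T := by
  induction T with
  | zero => simp
  | succ T ih =>
      rw [Finset.sum_Icc_succ_top (by omega), ih]
      push_cast
      ring

end Weight

section AreaLemmas

variable [DecidableEq ι] (φ : FreeGroup ι →* G)

lemma conj_build_prod (L : List (FreeGroup ι × FreeGroup ι)) (g : FreeGroup ι) :
    g * (L.map fun p => p.1⁻¹ * p.2 * p.1).prod * g⁻¹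
      = ((L.map fun p => (p.1 * g⁻¹, p.2)).map fun p => p.1⁻¹ * p.2 * p.1).prod := by
  induction L with
  | nil => simp
  | cons p L ih =>
      simp only [List.map_cons, List.prod_cons]
      rw [← mul_assoc, ← ih]
      group

lemma exists_areaLe {R : Set (FreeGroup ι)} {w : FreeGroup ι}
    (hw : w ∈ Subgroup.normalClosure R) : ∃ l, AreaLe R w l := by
  classical
  let S : Subgroup (FreeGroup ι) :=
    { carrier := {u | ∃ l, AreaLe R u l}
      one_mem' := ⟨0, [], rfl, by simp, by simp⟩
      mul_mem' := by
        rintro u v ⟨l1, L1, hL1, hm1, hp1⟩ ⟨l2, L2, hL2, hm2, hp2⟩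
        refine ⟨l1 + l2, L1 ++ L2, by simp [hL1, hL2], ?_, ?_⟩
        · intro p hp
          rcases List.mem_append.mp hp with h | h
          exacts [hm1 p h, hm2 p h]
        · rw [List.map_append, List.prod_append, ← hp1, ← hp2]
      inv_mem' := by
        rintro u ⟨l, L, hL, hm, hp⟩
        refine ⟨l, (L.map fun p => (p.1, p.2⁻¹)).reverse, by simp [hL], ?_, ?_⟩
        · intro p hp
          simp only [List.mem_reverse, List.mem_map] at hp
          obtain ⟨q, hq, rfl⟩ := hp
          rcases hm q hq with h | h
          · right; simpa using h
          · left; exact h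
        · rw [hp, List.prod_inv_reverse]
          have hfg : ((fun x => x⁻¹) ∘ fun p : FreeGroup ι × FreeGroup ι => p.1⁻¹ * p.2 * p.1)
              = ((fun p : FreeGroup ι × FreeGroup ι => p.1⁻¹ * p.2 * p.1)
                  ∘ fun p => (p.1, p.2⁻¹)) := by
            funext p
            simp only [Function.comp_apply]
            group
          rw [List.map_reverse, List.map_map, List.map_map, hfg] }
  have hnormal : S.Normal := by
    constructor
    intro u hu g
    obtain ⟨l, L, hL, hm, hp⟩ := hu
    refine ⟨l, L.map fun p => (p.1 * g⁻¹, p.2), by simp [hL], ?_, ?_⟩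
    · intro p hp
      simp only [List.mem_map] at hp
      obtain ⟨q, hq, rfl⟩ := hp
      exact hm q hq
    · rw [hp]
      exact conj_build_prod L g
  have hle : Subgroup.normalClosure R ≤ S := by
    apply Subgroup.normalClosure_le_normal (N := S)
    intro u hu
    exact ⟨1, [(1, u)], rfl, by simp [hu], by simp⟩
  exact hle hw

lemma area_areaLe {R : Set (FreeGroup ι)} {w : FreeGroup ι}
    (hw : w ∈ Subgroup.normalClosure R) : AreaLe R w (area R w) :=
  Nat.sInf_mem (exists_areaLe hw)

lemma le_isoSpec [Finite ι] {k m n : ℕ} {w : FreeGroup ι}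
    (hw : w ∈ Subgroup.normalClosure (triv φ k)) (hn : wnorm w ≤ n) :
    area (triv φ m) w ≤ isoSpec φ k m n := by
  have hfin : {u : FreeGroup ι | u ∈ Subgroup.normalClosure (triv φ k) ∧ wnorm u ≤ n}.Finite := by
    apply Set.Finite.subset ((List.finite_length_le (ι × Bool) n).image FreeGroup.mk)
    intro u hu
    exact ⟨u.toWord, by rw [Set.mem_setOf_eq, ← wnorm_toWord]; exact hu.2, FreeGroup.mk_toWord⟩
  exact le_csSup (hfin.image (area (triv φ m))).bddAbove ⟨w, ⟨hw, hn⟩, rfl⟩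

end AreaLemmas

/-- Clean final arithmetic. -/
lemma final_arith (P kk nn T r : ℝ) (hP4 : 4 ≤ P) (hk1 : 1 ≤ kk) (hn : 1 ≤ nn)
    (hr : 0 ≤ r) (hTr : T ≤ r) (hrT : r - 1 < T)
    (hfin : T ^ 2 - T ≤ P * kk * nn + P * kk ^ 2) :
    (16 * P ^ 2)⁻¹ * (r / kk) ^ 2 ≤ nn := by
  have hkk : (0 : ℝ) < kk := by linarith
  have hPpos : (0 : ℝ) < P := by linarith
  by_cases hbig : r ≤ 4 * P * kk
  · have h1 : r / kk ≤ 4 * P := by rw [div_le_iff₀ hkk]; exact hbig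
    have h0 : (0 : ℝ) ≤ r / kk := div_nonneg hr hkk.le
    have h2 : (r / kk) ^ 2 ≤ 16 * P ^ 2 := by nlinarith
    calc (16 * P ^ 2)⁻¹ * (r / kk) ^ 2 ≤ (16 * P ^ 2)⁻¹ * (16 * P ^ 2) :=
          mul_le_mul_of_nonneg_left h2 (by positivity)
      _ = 1 := inv_mul_cancel₀ (by positivity)
      _ ≤ nn := hn
  · push_neg at hbig
    have hPk : (4 : ℝ) ≤ P * kk := by
      nlinarith [mul_nonneg hPpos.le (sub_nonneg.mpr hk1)]
    have hr16 : (16 : ℝ) ≤ r := by nlinarith [hPk, hbig]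
    have h2 : (r - 1) ^ 2 - r ≤ T ^ 2 - T := by
      nlinarith [mul_self_le_mul_self (show (0:ℝ) ≤ r - 1 by linarith) (le_of_lt hrT), hTr]
    have h3 : P * kk ^ 2 ≤ r ^ 2 / 4 := by
      nlinarith [mul_self_le_mul_self (show (0:ℝ) ≤ 4 * P * kk by positivity) hbig.le,
        mul_nonneg (mul_nonneg hPpos.le hkk.le) hkk.le,
        mul_nonneg (mul_nonneg (mul_nonneg hPpos.le hPpos.le) hkk.le) hkk.le]
    have h4 : r ^ 2 / 2 ≤ P * kk * nn := by
      nlinarith [hfin, h2, h3, mul_nonneg (show (0:ℝ) ≤ r - 16 by linarith) hr]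
    have hn0 : (0 : ℝ) ≤ nn := by linarith
    have q1 : (0 : ℝ) ≤ (P * kk - 4) * nn * (P * kk) := by
      apply mul_nonneg (mul_nonneg (by linarith) hn0) (by positivity)
    have q2 : (0 : ℝ) ≤ P * kk * nn := by positivity
    have key2 : r ^ 2 ≤ 16 * P ^ 2 * kk ^ 2 * nn := by nlinarith [h4, q1, q2]
    rw [div_pow, inv_mul_le_iff₀ (by positivity), div_le_iff₀ (by positivity)]
    nlinarith [key2]

/-- In a group with linear isoperimetric spectrum, if `q` is an
`r`-detour of a vertex `o` of a geodesic `p` and the loop `p q⁻¹` is labelled by a word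
in `⟪S_k⟫`, then `ℓ(q) ≥ D (r/k)²`. -/
theorem detour_of_linear_isoSpec {G : Type} [Group G] {a : ℕ}
    (φ : FreeGroup (Fin a) →* G) (hφ : Surjective φ)
    (hlin : SpecEquiv (isoSpecR φ) linSpec) :
    ∃ D : ℝ, 0 < D ∧
      ∀ (x : G) (Lp Lq : List (Fin a × Bool)) (o : G) (r : ℝ) (k : ℕ),
        0 < k → 0 ≤ r →
        -- `p` is geodesic: its length realizes the distance between its endpoints
        wlen φ (φ (FreeGroup.mk Lp)) = Lp.length →
        -- `o` is a vertex of `p`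
        o ∈ pathVerts φ x Lp →
        -- `q` has the same endpoints as `p`
        φ (FreeGroup.mk Lq) = φ (FreeGroup.mk Lp) →
        -- `q` avoids the closed `r`-neighborhood of `o`
        (∀ g ∈ pathVerts φ x Lq, r < (wdist φ o g : ℝ)) →
        -- the label of the loop `p q⁻¹` lies in `⟪S_k⟫`
        FreeGroup.mk Lp * (FreeGroup.mk Lq)⁻¹ ∈ Subgroup.normalClosure (triv φ k) →
        D * (r / (k : ℝ)) ^ 2 ≤ (Lq.length : ℝ) := by
  classical
  obtain ⟨C, hC0, hspec⟩ := hlin.1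
  set c : ℝ := (C : ℝ) with hcdef
  have hc1 : (1 : ℝ) ≤ c := by rw [hcdef]; exact_mod_cast hC0
  set P : ℝ := 4 * c ^ 5 with hPdef
  have hc5 : (1 : ℝ) ≤ c ^ 5 := by
    have h := pow_le_pow_left₀ (by norm_num : (0:ℝ) ≤ 1) hc1 5
    simpa using h
  have hP4 : (4 : ℝ) ≤ P := by rw [hPdef]; linarith
  have hPpos : (0 : ℝ) < P := by linarith
  refine ⟨(16 * P ^ 2)⁻¹, by positivity, ?_⟩
  intro x Lp Lq o r k hk hr hgeo ho hq hdet hw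
  set n₁ := Lp.length with hn₁def
  set n₂ := Lq.length with hn₂def
  obtain ⟨j₀, hj₀n, hoeq⟩ := ho
  have hov : o = vtx φ x Lp j₀ := hoeq
  have hkR : (1 : ℝ) ≤ (k : ℝ) := by exact_mod_cast hk
  -- distances along the geodesic p
  have hxe : wdist φ x (x * φ (FreeGroup.mk Lp)) = n₁ := by
    unfold wdist
    rw [show x⁻¹ * (x * φ (FreeGroup.mk Lp)) = φ (FreeGroup.mk Lp) by group]
    exact hgeo
  have hdx : ∀ j, j ≤ n₁ → wdist φ x (vtx φ x Lp j) = j ∧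
      wdist φ (vtx φ x Lp j) (x * φ (FreeGroup.mk Lp)) = n₁ - j := by
    intro j hj
    have h1 : wdist φ x (vtx φ x Lp j) ≤ j := wdist_base_vtx φ x Lp j
    have h2 : wdist φ (vtx φ x Lp j) (x * φ (FreeGroup.mk Lp)) ≤ n₁ - j := by
      have h := wdist_vtx_le φ x Lp hj
      rwa [vtx_length] at h
    have h3 : n₁ ≤ wdist φ x (vtx φ x Lp j)
        + wdist φ (vtx φ x Lp j) (x * φ (FreeGroup.mk Lp)) := by
      rw [← hxe]
      exact wdist_triangle φ hφ _ _ _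
    omega
  have hDo : ∀ j, j ≤ n₁ →
      (j ≤ j₀ → wdist φ o (vtx φ x Lp j) = j₀ - j) ∧
      (j₀ ≤ j → wdist φ o (vtx φ x Lp j) = j - j₀) := by
    intro j hj
    have hxj := (hdx j hj).1
    have hxj₀ := (hdx j₀ hj₀n).1
    constructor
    · intro hjle
      have hub : wdist φ o (vtx φ x Lp j) ≤ j₀ - j := by
        rw [hov, wdist_symm φ hφ]
        exact wdist_vtx_le φ x Lp hjle
      have htr : wdist φ x (vtx φ x Lp j₀)
          ≤ wdist φ x (vtx φ x Lp j) + wdist φ (vtx φ x Lp j) (vtx φ x Lp j₀) := by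
        exact wdist_triangle φ hφ _ _ _
      have hsw : wdist φ (vtx φ x Lp j) (vtx φ x Lp j₀) = wdist φ o (vtx φ x Lp j) := by
        rw [hov, wdist_symm φ hφ]
      rw [hxj, hxj₀, hsw] at htr
      omega
    · intro hjge
      have hub : wdist φ o (vtx φ x Lp j) ≤ j - j₀ := by
        rw [hov]
        exact wdist_vtx_le φ x Lp hjge
      have htr : wdist φ x (vtx φ x Lp j)
          ≤ wdist φ x (vtx φ x Lp j₀) + wdist φ (vtx φ x Lp j₀) (vtx φ x Lp j) := by
        exact wdist_triangle φ hφ _ _ _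
      rw [hxj, hxj₀, ← hov] at htr
      omega
  -- the endpoints of q are far from o
  have hx_in : x ∈ pathVerts φ x Lq := ⟨0, Nat.zero_le _, by simp [← FreeGroup.one_eq_mk]⟩
  have hxe_in : x * φ (FreeGroup.mk Lp) ∈ pathVerts φ x Lq :=
    ⟨n₂, le_of_eq hn₂def, by rw [hn₂def, List.take_length, hq]⟩
  have hrj₀ : r < (j₀ : ℝ) := by
    have h := hdet x hx_in
    have heq : wdist φ o x = j₀ := by
      rw [wdist_symm φ hφ, hov]
      exact (hdx j₀ hj₀n).1
    rwa [heq] at h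
  have hrn : r < ((n₁ - j₀ : ℕ) : ℝ) := by
    have h := hdet _ hxe_in
    have heq : wdist φ o (x * φ (FreeGroup.mk Lp)) = n₁ - j₀ := by
      rw [hov]
      exact (hdx j₀ hj₀n).2
    rwa [heq] at h
  have hj₀1 : 1 ≤ j₀ := by
    rcases Nat.eq_zero_or_pos j₀ with h | h
    · rw [h] at hrj₀; simp at hrj₀; linarith
    · exact h
  have hn₁1 : 1 ≤ n₁ := le_trans hj₀1 hj₀n
  have hn₁n₂ : n₁ ≤ n₂ := by
    calc n₁ = wlen φ (φ (FreeGroup.mk Lp)) := hgeo.symm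
      _ = wlen φ (φ (FreeGroup.mk Lq)) := by rw [hq]
      _ ≤ wnorm (FreeGroup.mk Lq) := wlen_le φ _
      _ ≤ n₂ := wnorm_mk_le Lq
  have hn₂R : (1 : ℝ) ≤ (n₂ : ℝ) := by exact_mod_cast le_trans hn₁1 hn₁n₂
  -- the floor level
  set T := ⌊r⌋₊ with hTdef
  have hTr : (T : ℝ) ≤ r := Nat.floor_le hr
  have hrT : r - 1 < (T : ℝ) := Nat.sub_one_lt_floor r
  -- the word and its filling
  set M := C * (C * k) with hMdef
  have hkM : k ≤ M := by
    have h1 : k ≤ C * k := Nat.le_mul_of_pos_left k hC0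
    have h2 : C * k ≤ C * (C * k) := Nat.le_mul_of_pos_left (C * k) hC0
    exact le_trans h1 h2
  set w : FreeGroup (Fin a) := FreeGroup.mk Lp * (FreeGroup.mk Lq)⁻¹ with hwdef
  set n := n₁ + n₂ with hndef
  have hwn : wnorm w ≤ n := by
    calc wnorm w ≤ wnorm (FreeGroup.mk Lp) + wnorm (FreeGroup.mk Lq)⁻¹ := wnorm_mul_le _ _
      _ = wnorm (FreeGroup.mk Lp) + wnorm (FreeGroup.mk Lq) := by rw [wnorm_inv]
      _ ≤ n₁ + n₂ := Nat.add_le_add (wnorm_mk_le Lp) (wnorm_mk_le Lq)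
  have hwM : w ∈ Subgroup.normalClosure (triv φ M) := by
    apply Subgroup.normalClosure_mono _ hw
    intro u hu
    exact ⟨le_trans hu.1 hkM, hu.2⟩
  set ℓ := area (triv φ M) w with hldef
  obtain ⟨Lw, hLlen, hLmem, hLprod⟩ := area_areaLe hwM
  have hφ1 : ∀ p ∈ Lw, φ p.2 = 1 := by
    intro p hp
    rcases hLmem p hp with h | h
    · exact h.2
    · have h2 := h.2
      rw [map_inv, inv_eq_one] at h2
      exact h2
  have hNp : ∀ p ∈ Lw, (p.2.toWord.length : ℝ) ≤ (M : ℝ) := by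
    intro p hp
    have : wnorm p.2 ≤ M := by
      rcases hLmem p hp with h | h
      · exact h.1
      · rw [← wnorm_inv]; exact h.1
    rw [← wnorm_toWord]
    exact_mod_cast this
  -- the boundary path
  set bdry : List (Fin a × Bool) := Lp ++ FreeGroup.invRev Lq with hbdef
  have hmkb : FreeGroup.mk bdry = w := by
    rw [hbdef, ← FreeGroup.mul_mk, ← FreeGroup.inv_mk]
  -- reference points
  set aSt : ℕ → G := fun t => vtx φ x Lp (j₀ - t + 1) with haSt
  -- the vertices of the inverted q path
  have hvq : ∀ i, i ≤ n₂ → vtx φ (x * φ (FreeGroup.mk Lp)) (FreeGroup.invRev Lq) i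
      = x * φ (FreeGroup.mk (Lq.take (n₂ - i))) := by
    intro i hi
    unfold vtx
    have htake : (FreeGroup.invRev Lq).take i = FreeGroup.invRev (Lq.drop (n₂ - i)) := by
      unfold FreeGroup.invRev
      rw [List.take_reverse, List.length_map]
      congr 1
      exact (List.map_drop).symm
    rw [htake, ← FreeGroup.inv_mk, map_inv, ← hq]
    have hsplit : FreeGroup.mk Lq
        = FreeGroup.mk (Lq.take (n₂ - i)) * FreeGroup.mk (Lq.drop (n₂ - i)) := by
      rw [FreeGroup.mul_mk, List.take_append_drop]
    rw [hsplit, map_mul]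
    group
  -- the per-level boundary lower bound
  have hbdryLB : ∀ t ∈ Finset.Icc 1 T, 2 * (t : ℝ) - 2 ≤ pSum φ (Wt φ o (aSt t) t) x bdry := by
    intro t ht
    rw [Finset.mem_Icc] at ht
    have htT : (t : ℝ) ≤ r := le_trans (by exact_mod_cast ht.2) hTr
    have htj₀ : t < j₀ := by exact_mod_cast lt_of_le_of_lt htT hrj₀
    have htn : t < n₁ - j₀ := by exact_mod_cast lt_of_le_of_lt htT hrn
    have ht1 : 1 ≤ t := ht.1
    rw [hbdef, pSum_append]
    -- the q part vanishes
    have hq0 : pSum φ (Wt φ o (aSt t) t) (x * φ (FreeGroup.mk Lp)) (FreeGroup.invRev Lq) = 0 := by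
      apply Finset.sum_eq_zero
      intro j hj
      rw [FreeGroup.invRev_length] at hj
      have hjn : j < n₂ := Finset.mem_range.mp hj
      have hD : ∀ i, i ≤ n₂ →
          t ≤ wdist φ o (vtx φ (x * φ (FreeGroup.mk Lp)) (FreeGroup.invRev Lq) i) := by
        intro i hi
        rw [hvq i hi]
        have hfar := hdet _ ⟨n₂ - i, by omega, rfl⟩
        have : (t : ℝ) < (wdist φ o (x * φ (FreeGroup.mk (Lq.take (n₂ - i)))) : ℝ) :=
          lt_of_le_of_lt htT hfar
        exact_mod_cast this.le
      show Wt φ o (aSt t) t _ _ = 0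
      unfold Wt ft
      rw [if_pos (hD (j + 1) hjn), if_pos (hD j hjn.le), sub_self, zero_mul]
    rw [hq0, add_zero]
    -- the p part is a single crossing term
    have hpART : pSum φ (Wt φ o (aSt t) t) x Lp
        = (wdist φ (aSt t) (vtx φ x Lp (j₀ + t - 1)) : ℝ) := by
      unfold pSum
      rw [Finset.sum_eq_single_of_mem (j₀ + t - 1) (Finset.mem_range.mpr (by omega))]
      · have hDj : wdist φ o (vtx φ x Lp (j₀ + t - 1)) = t - 1 := by
          have h := (hDo (j₀ + t - 1) (by omega)).2 (by omega)
          omega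
        have hDj1 : wdist φ o (vtx φ x Lp (j₀ + t - 1 + 1)) = t := by
          have h := (hDo (j₀ + t - 1 + 1) (by omega)).2 (by omega)
          omega
        unfold Wt ft uu
        rw [hDj, hDj1, if_pos (le_refl t), if_neg (by omega), if_pos (by omega)]
        ring
      · intro j hjr hne
        have hjN : j < n₁ := Finset.mem_range.mp hjr
        by_cases hcase : j = j₀ - t
        · -- the inward crossing: the u-factor vanishes
          have hDj : wdist φ o (vtx φ x Lp j) = t := by
            have h := (hDo j hjN.le).1 (by omega)
            omega
          have hDj1 : wdist φ o (vtx φ x Lp (j + 1)) = t - 1 := by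
            have h := (hDo (j + 1) (by omega)).1 (by omega)
            omega
          have hva : vtx φ x Lp (j + 1) = aSt t := by
            show vtx φ x Lp (j + 1) = vtx φ x Lp (j₀ - t + 1)
            rw [hcase]
          show Wt φ o (aSt t) t _ _ = 0
          unfold Wt uu
          rw [hDj, hDj1, if_neg (by omega), hva, wdist_self]
          simp
        · -- no crossing at all
          have h1 : wdist φ o (vtx φ x Lp j) = if j ≤ j₀ then j₀ - j else j - j₀ := by
            rcases le_or_gt j j₀ with h | h
            · rw [if_pos h]; exact (hDo j hjN.le).1 h
            · rw [if_neg (not_le.mpr h)]; exact (hDo j hjN.le).2 h.le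
          have h2 : wdist φ o (vtx φ x Lp (j + 1))
              = if j + 1 ≤ j₀ then j₀ - (j + 1) else (j + 1) - j₀ := by
            rcases le_or_gt (j + 1) j₀ with h | h
            · rw [if_pos h]; exact (hDo (j + 1) (by omega)).1 h
            · rw [if_neg (not_le.mpr h)]; exact (hDo (j + 1) (by omega)).2 (by omega)
          show Wt φ o (aSt t) t _ _ = 0
          unfold Wt ft
          rw [h1, h2]
          have hiff : (t ≤ if j + 1 ≤ j₀ then j₀ - (j + 1) else (j + 1) - j₀)
              ↔ (t ≤ if j ≤ j₀ then j₀ - j else j - j₀) := by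
            split_ifs <;> omega
          by_cases hb : t ≤ if j ≤ j₀ then j₀ - j else j - j₀
          · rw [if_pos hb, if_pos (hiff.mpr hb), sub_self, zero_mul]
          · rw [if_neg hb, if_neg (fun hcon => hb (hiff.mp hcon)), sub_self, zero_mul]
    rw [hpART]
    -- lower bound on the remaining term
    have htri : j₀ + t - 1 ≤ (j₀ - t + 1) + wdist φ (aSt t) (vtx φ x Lp (j₀ + t - 1)) := by
      have h3 := wdist_triangle φ hφ x (aSt t) (vtx φ x Lp (j₀ + t - 1))
      rw [(hdx (j₀ + t - 1) (by omega)).1] at h3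
      have h4 : wdist φ x (aSt t) = j₀ - t + 1 := (hdx (j₀ - t + 1) (by omega)).1
      rw [h4] at h3
      exact h3
    have : 2 * t ≤ wdist φ (aSt t) (vtx φ x Lp (j₀ + t - 1)) + 2 := by omega
    have hcast : (2 * t : ℝ) ≤ (wdist φ (aSt t) (vtx φ x Lp (j₀ + t - 1)) : ℝ) + 2 := by
      exact_mod_cast this
    linarith
  -- assemble: the quadratic lower bound on the filling
  have hmain : (T : ℝ) ^ 2 - T ≤ (ℓ : ℝ) * (M : ℝ) ^ 2 := by
    rw [← gauss_sum T]
    calc ∑ t ∈ Finset.Icc 1 T, (2 * (t : ℝ) - 2)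
        ≤ ∑ t ∈ Finset.Icc 1 T, pSum φ (Wt φ o (aSt t) t) x bdry :=
          Finset.sum_le_sum hbdryLB
      _ = ∑ t ∈ Finset.Icc 1 T,
            (Lw.map fun p => pSum φ (Wt φ o (aSt t) t) (x * (φ p.1)⁻¹) p.2.toWord).sum := by
          apply Finset.sum_congr rfl
          intro t _
          rw [pSum_eq_chi φ _ (anti_Wt φ o (aSt t) t), hmkb, hLprod,
            chi_prod φ _ (anti_Wt φ o (aSt t) t) x Lw hφ1]
          rfl
      _ = (Lw.map fun p => ∑ t ∈ Finset.Icc 1 T,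
            pSum φ (Wt φ o (aSt t) t) (x * (φ p.1)⁻¹) p.2.toWord).sum := by
          rw [list_sum_swap]
      _ ≤ (ℓ : ℝ) * (M : ℝ) ^ 2 := by
          have hall : ∀ z ∈ (Lw.map fun p => ∑ t ∈ Finset.Icc 1 T,
              pSum φ (Wt φ o (aSt t) t) (x * (φ p.1)⁻¹) p.2.toWord), z ≤ (M : ℝ) ^ 2 := by
            intro z hz
            simp only [List.mem_map] at hz
            obtain ⟨p, hp, rfl⟩ := hz
            calc ∑ t ∈ Finset.Icc 1 T, pSum φ (Wt φ o (aSt t) t) (x * (φ p.1)⁻¹) p.2.toWord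
                ≤ (p.2.toWord.length : ℝ) ^ 2 :=
                  loop_bound φ hφ o aSt T _ _ (by rw [FreeGroup.mk_toWord]; exact hφ1 p hp)
              _ ≤ (M : ℝ) ^ 2 :=
                  pow_le_pow_left₀ (Nat.cast_nonneg _) (hNp p hp) 2
          have hbound := List.sum_le_card_nsmul _ _ hall
          rw [List.length_map, hLlen, nsmul_eq_mul] at hbound
          exact hbound
  -- the isoperimetric bound on the filling
  have hl : (ℓ : ℝ) ≤ (c + 1) * (n : ℝ) / (k : ℝ) + c := by
    have h1 : (ℓ : ℝ) ≤ isoSpecR φ k M n := by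
      unfold isoSpecR
      exact_mod_cast le_isoSpec φ hw hwn
    have h2 := hspec k (C * k) n hk (Nat.mul_pos hC0 hk) (by omega) (le_refl _)
    unfold linSpec at h2
    rw [show C * (C * k) = M from rfl] at h2
    have h3 : (ℓ : ℝ) ≤ c * (((C * n : ℕ) : ℝ) / ((C * k : ℕ) : ℝ)) + c * (n : ℝ) / ((C * k : ℕ) : ℝ) + c :=
      le_trans h1 h2
    have hck : (0 : ℝ) < c := by linarith
    have hkk : (0 : ℝ) < (k : ℝ) := by linarith
    push_cast at h3
    have he1 : c * (c * (n : ℝ) / (c * (k : ℝ))) = c * (n : ℝ) / (k : ℝ) := by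
      field_simp
    have he2 : c * (n : ℝ) / (c * (k : ℝ)) = (n : ℝ) / (k : ℝ) := by
      field_simp
    rw [he1, he2] at h3
    calc (ℓ : ℝ) ≤ c * (n : ℝ) / (k : ℝ) + (n : ℝ) / (k : ℝ) + c := h3
      _ = (c + 1) * (n : ℝ) / (k : ℝ) + c := by ring
  -- final arithmetic
  have hMr : (M : ℝ) = c * (c * (k : ℝ)) := by
    rw [hMdef, hcdef]; push_cast; ring
  have hnr : (n : ℝ) ≤ 2 * (n₂ : ℝ) := by
    rw [hndef]
    push_cast
    have : (n₁ : ℝ) ≤ (n₂ : ℝ) := by exact_mod_cast hn₁n₂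
    linarith
  have hl0 : (0 : ℝ) ≤ (ℓ : ℝ) := Nat.cast_nonneg _
  have hfin : (T : ℝ) ^ 2 - T ≤ P * k * n₂ + P * (k : ℝ) ^ 2 := by
    have h1 : (T : ℝ) ^ 2 - T ≤ ((c + 1) * (n : ℝ) / (k : ℝ) + c) * (c * (c * (k : ℝ))) ^ 2 := by
      rw [← hMr]
      calc (T : ℝ) ^ 2 - T ≤ (ℓ : ℝ) * (M : ℝ) ^ 2 := hmain
        _ ≤ ((c + 1) * (n : ℝ) / (k : ℝ) + c) * (M : ℝ) ^ 2 := by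
            apply mul_le_mul_of_nonneg_right hl (by positivity)
    have hkk : (0 : ℝ) < (k : ℝ) := by linarith
    have hexp : ((c + 1) * (n : ℝ) / (k : ℝ) + c) * (c * (c * (k : ℝ))) ^ 2
        = (c + 1) * c ^ 4 * (n : ℝ) * (k : ℝ) + c ^ 5 * (k : ℝ) ^ 2 := by
      field_simp
    rw [hexp] at h1
    have hn0 : (0 : ℝ) ≤ (n : ℝ) := Nat.cast_nonneg _
    have hc0 : (0 : ℝ) ≤ c := by linarith
    have h45 : c ^ 4 ≤ c ^ 5 := by
      nlinarith [mul_nonneg (pow_nonneg hc0 4) (sub_nonneg.mpr hc1)]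
    have hcc : (c + 1) * c ^ 4 ≤ 2 * c ^ 5 := by nlinarith [h45]
    have h2 : (c + 1) * c ^ 4 * (n : ℝ) * (k : ℝ) ≤ P * (k : ℝ) * (n₂ : ℝ) := by
      have e1 : (c + 1) * c ^ 4 * ((n : ℝ) * (k : ℝ)) ≤ (2 * c ^ 5) * ((n : ℝ) * (k : ℝ)) :=
        mul_le_mul_of_nonneg_right hcc (mul_nonneg hn0 hkk.le)
      have e2 : (2 * c ^ 5) * ((n : ℝ) * (k : ℝ)) ≤ (2 * c ^ 5) * ((2 * (n₂ : ℝ)) * (k : ℝ)) := by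
        apply mul_le_mul_of_nonneg_left _ (by positivity)
        exact mul_le_mul_of_nonneg_right hnr hkk.le
      have e3 : (2 * c ^ 5) * ((2 * (n₂ : ℝ)) * (k : ℝ)) = P * (k : ℝ) * (n₂ : ℝ) := by
        rw [hPdef]; ring
      nlinarith [e1, e2, e3]
    have h3 : c ^ 5 * (k : ℝ) ^ 2 ≤ P * (k : ℝ) ^ 2 := by
      have hcP : c ^ 5 ≤ P := by rw [hPdef]; linarith
      exact mul_le_mul_of_nonneg_right hcP (sq_nonneg _)
    linarith
  exact final_arith P (k : ℝ) (n₂ : ℝ) (T : ℝ) r hP4 hkR hn₂R hr hTr hrT hfin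

end IsoSpecPaper
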